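/- Let ⪯ be a total preorder on [2k] and let L ⊆ ℕ^{2k} be defined by L = {n : ∀ i j, i ⪯ j → n_i ≤ n_j}. Then L is the submonoid of (ℕ^{2k}, +) generated by the 2k vectors e^{(j)}, j ∈ [2k], where e^{(j)}_i = 1 if j ⪯ i and e^{(j)}_i = 0 otherwise. -/

import Mathlib

/-- For a total preorder `r` on `Fin (2k)`, the set of `r`-monotone tuples in `ℕ^{2k}`
is exactly the additive submonoid generated by the indicator vectors `e^{(j)}` of the
up-sets of single elements: `e^{(j)}_i = 1` if `j ⪯ i`, else `0`. -/
theorem stmt_9 (k : ℕ) (r : Fin (2 * k) → Fin (2 * k) → Prop) [DecidableRel r]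
    (hrefl : Reflexive r) (htrans : Transitive r) (htotal : ∀ a b, r a b ∨ r b a) :
    {n : Fin (2 * k) → ℕ | ∀ i j, r i j → n i ≤ n j} =
      (AddSubmonoid.closure
        {e : Fin (2 * k) → ℕ | ∃ j, e = fun i => if r j i then 1 else 0} :
        Set (Fin (2 * k) → ℕ)) := by
  ext n
  simp only [Set.mem_setOf_eq, SetLike.mem_coe]
  constructor
  · intro hn
    have key : ∀ N (n : Fin (2 * k) → ℕ), (∑ i, n i) = N → (∀ i j, r i j → n i ≤ n j) →
        n ∈ AddSubmonoid.closure
          {e : Fin (2 * k) → ℕ | ∃ j, e = fun i => if r j i then 1 else 0} := by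
      intro N
      induction N using Nat.strong_induction_on with
      | _ N ih =>
        intro n hsum hmono
        by_cases h0 : n = 0
        · subst h0; exact zero_mem _
        · obtain ⟨i0, hi0⟩ : ∃ i, n i ≠ 0 := by
            by_contra h; push_neg at h; exact h0 (funext fun i => h i)
          set f : Fin (2 * k) → ℕ := fun i => (Finset.univ.filter (fun l => r l i)).card
            with hf
          have hfr : ∀ i j, f i ≤ f j → r i j := by
            intro i j hij
            by_contra hr
            have hji : r j i := (htotal i j).resolve_left hr
            have hlt : f j < f i := by
              apply Finset.card_lt_card
              constructor
              · intro l hl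
                simp only [Finset.mem_filter] at *
                exact ⟨hl.1, htrans hl.2 hji⟩
              · intro hsub
                have hmem : i ∈ Finset.univ.filter (fun l => r l i) := by
                  simp [hrefl i]
                have := hsub hmem
                simp only [Finset.mem_filter] at this
                exact hr this.2
            omega
          obtain ⟨j0, hj0S, hj0min⟩ := Finset.exists_min_image
            (Finset.univ.filter fun i => n i ≠ 0) f ⟨i0, by simp [hi0]⟩
          simp only [Finset.mem_filter] at hj0S
          have hj0 : ∀ i, n i ≠ 0 → r j0 i := fun i hi =>
            hfr _ _ (hj0min i (by simp [hi]))
          set e : Fin (2 * k) → ℕ := fun i => if r j0 i then 1 else 0 with he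
          have hle : ∀ i, e i ≤ n i := by
            intro i
            simp only [he]
            split
            · rename_i h
              have h1 := hmono j0 i h
              have h2 : n j0 ≠ 0 := hj0S.2
              omega
            · omega
          have hmono' : ∀ i j, r i j → n i - e i ≤ n j - e j := by
            intro i j hij
            by_cases hji0 : r j0 i
            · have hjj : r j0 j := htrans hji0 hij
              have h1 := hmono i j hij
              simp only [he, if_pos hji0, if_pos hjj]
              omega
            · simp only [he, if_neg hji0]
              split
              · have hni : n i = 0 := by
                  by_contra h
                  exact hji0 (hj0 i h)
                omega
              · have := hmono i j hij; omega
          have hsum' : ∑ i, (n i - e i) < N := by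
            have hsplit : ∑ i, (n i - e i) + ∑ i, e i = ∑ i, n i := by
              rw [← Finset.sum_add_distrib]
              exact Finset.sum_congr rfl fun i _ => by have := hle i; omega
            have hepos : 0 < ∑ i, e i := by
              have h1 : 0 < e j0 := by simp [he, hrefl j0]
              exact h1.trans_le
                (Finset.single_le_sum (fun i _ => Nat.zero_le _) (Finset.mem_univ j0))
            omega
          have hrec := ih _ hsum' (fun i => n i - e i) rfl hmono'
          have hdecomp : n = (fun i => n i - e i) + e := by
            funext i
            have := hle i
            simp only [Pi.add_apply]
            omega
          rw [hdecomp]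
          exact add_mem hrec (AddSubmonoid.subset_closure ⟨j0, rfl⟩)
    exact key _ n rfl hn
  · intro hn
    induction hn using AddSubmonoid.closure_induction with
    | mem x hx =>
      obtain ⟨j0, rfl⟩ := hx
      intro i j hij
      by_cases h : r j0 i
      · simp [h, htrans h hij]
      · simp [h]
    | zero => intro i j _; simp
    | add x y _ _ hx hy => intro i j hij; exact add_le_add (hx i j hij) (hy i j hij)
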